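/- With Λ_u(x;y) as above, C_N(u) Λ_u(x;y) = (−i)^{N+1} Λ_{u−iħ}(x;y), where C_N(u) is the (2,1) entry of the monodromy matrix acting as a differential operator on the x-variables. -/

import Mathlib

noncomputable section

open Complex

/-- Complex-valued functions of countably many real coordinates `x 1, x 2, …`. -/
abbrev TodaFun := (ℕ → ℝ) → ℂ

/-- The momentum operator of the `n`-th particle, `p_n = −iħ ∂/∂x_n`. -/
def pOp (hbar : ℝ) (n : ℕ) (f : TodaFun) : TodaFun :=
  fun x => (-Complex.I * hbar) * deriv (fun t : ℝ => f (Function.update x n t)) (x n)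

/-- The Lax matrix `L_n(u) = [[u − p_n, e^{−x_n}], [−e^{x_n}, 0]]`,
as a 2×2 matrix of operators on functions. -/
def Lax (hbar : ℝ) (u : ℂ) (n : ℕ) : Fin 2 → Fin 2 → (TodaFun → TodaFun) :=
  ![![fun f x => u * f x - pOp hbar n f x, fun f x => (Real.exp (-(x n)) : ℂ) * f x],
    ![fun f x => (-Real.exp (x n) : ℝ) * f x, fun _ _ => 0]]

/-- Product of 2×2 matrices of operators: `(AB)_{ij} f = A_{i0}(B_{0j} f) + A_{i1}(B_{1j} f)`. -/
def mulOp (A B : Fin 2 → Fin 2 → (TodaFun → TodaFun)) : Fin 2 → Fin 2 → (TodaFun → TodaFun) :=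
  fun i j f x => A i 0 (B 0 j f) x + A i 1 (B 1 j f) x

/-- The monodromy matrix `T_N(u) = L_N(u) ⋯ L_1(u)`, with `T_0 = Id`. -/
def Tmat (hbar : ℝ) (u : ℂ) : ℕ → (Fin 2 → Fin 2 → (TodaFun → TodaFun))
  | 0 => ![![fun f => f, fun _ _ => 0], ![fun _ _ => 0, fun f => f]]
  | (n + 1) => mulOp (Lax hbar u (n + 1)) (Tmat hbar u n)

/-- `A_N(u)`: the (1,1) entry of the monodromy matrix. -/
def Aop (hbar : ℝ) (u : ℂ) (N : ℕ) : TodaFun → TodaFun := Tmat hbar u N 0 0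

/-- `B_N(u)`: the (1,2) entry of the monodromy matrix. -/
def Bop (hbar : ℝ) (u : ℂ) (N : ℕ) : TodaFun → TodaFun := Tmat hbar u N 0 1

/-- `C_N(u)`: the (2,1) entry of the monodromy matrix. -/
def Cop (hbar : ℝ) (u : ℂ) (N : ℕ) : TodaFun → TodaFun := Tmat hbar u N 1 0

/-- `D_N(u)`: the (2,2) entry of the monodromy matrix. -/
def Dop (hbar : ℝ) (u : ℂ) (N : ℕ) : TodaFun → TodaFun := Tmat hbar u N 1 1

/-- The kernel
`Λ_u(x;y) = exp{(i/ħ)u(Σ_{n=1}^N x_n − Σ_{n=1}^{N−1} y_n)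
  − (1/ħ)Σ_{n=1}^{N−1}(e^{y_n−x_{n+1}} + e^{x_n−y_n})}`. -/
def LamKer (hbar : ℝ) (N : ℕ) (u : ℂ) (y : ℕ → ℝ) : TodaFun :=
  fun x => Complex.exp (Complex.I * u / hbar
    * (((∑ n ∈ Finset.Icc 1 N, x n) - ∑ n ∈ Finset.Icc 1 (N - 1), y n : ℝ) : ℂ)
    - ((1 / hbar) * ∑ n ∈ Finset.Icc 1 (N - 1),
        (Real.exp (y n - x (n + 1)) + Real.exp (x n - y n)) : ℝ))

namespace CopAux

/-- Partial sum `S_m(x) = ∑_{j=1}^m (x_j - y_j)`. -/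
def SS (y : ℕ → ℝ) (m : ℕ) (x : ℕ → ℝ) : ℝ := ∑ j ∈ Finset.Icc 1 m, (x j - y j)

lemma SS_update (y : ℕ → ℝ) (m k : ℕ) (hk : m < k) (x : ℕ → ℝ) (t : ℝ) :
    SS y m (Function.update x k t) = SS y m x := by
  unfold SS
  refine Finset.sum_congr rfl fun j hj => ?_
  have hj' : j ≠ k := by have := (Finset.mem_Icc.mp hj).2; omega
  rw [Function.update_of_ne hj']

lemma SS_succ (y : ℕ → ℝ) (m : ℕ) (x : ℕ → ℝ) :
    SS y (m + 1) x = SS y m x + (x (m + 1) - y (m + 1)) := by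
  unfold SS
  rw [Finset.sum_Icc_succ_top (by omega : 1 ≤ m + 1)]

lemma lam_hasDerivAt (hbar : ℝ) (N : ℕ) (u : ℂ) (y : ℕ → ℝ)
    (m : ℕ) (hm1 : 1 ≤ m) (hmN : m ≤ N) (x : ℕ → ℝ) :
    HasDerivAt (fun t : ℝ => LamKer hbar N u y (Function.update x m t))
      ((Complex.I * u / hbar
         - (((1 / hbar) * ∑ n ∈ Finset.Icc 1 (N - 1),
              ((if n + 1 = m then -Real.exp (y n - x m) else 0)
                + (if n = m then Real.exp (x m - y n) else 0)) : ℝ) : ℂ))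
        * LamKer hbar N u y x) (x m) := by
  have h1 : HasDerivAt (fun t : ℝ =>
      ((∑ n ∈ Finset.Icc 1 N, Function.update x m t n)
        - ∑ n ∈ Finset.Icc 1 (N - 1), y n : ℝ)) 1 (x m) := by
    have hsum : HasDerivAt (fun t : ℝ => ∑ n ∈ Finset.Icc 1 N, Function.update x m t n)
        (∑ n ∈ Finset.Icc 1 N, if n = m then (1:ℝ) else 0) (x m) := by
      apply HasDerivAt.fun_sum
      intro n _
      by_cases hn : n = m
      · subst hn
        simp only [if_pos rfl]
        have : (fun t : ℝ => Function.update x n t n) = fun t => t := by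
          funext t; rw [Function.update_self]
        rw [this]; exact hasDerivAt_id _
      · simp only [if_neg hn]
        have : (fun t : ℝ => Function.update x m t n) = fun _ => x n := by
          funext t; rw [Function.update_of_ne hn]
        rw [this]; exact hasDerivAt_const _ _
    have hval : (∑ n ∈ Finset.Icc 1 N, if n = m then (1:ℝ) else 0) = 1 := by
      rw [Finset.sum_ite_eq' (Finset.Icc 1 N) m (fun _ => (1:ℝ))]
      simp [Finset.mem_Icc.mpr ⟨hm1, hmN⟩]
    rw [hval] at hsum
    simpa using hsum.sub_const (∑ n ∈ Finset.Icc 1 (N - 1), y n)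
  have h2 : HasDerivAt (fun t : ℝ =>
      ∑ n ∈ Finset.Icc 1 (N - 1),
        (Real.exp (y n - Function.update x m t (n + 1))
          + Real.exp (Function.update x m t n - y n)))
      (∑ n ∈ Finset.Icc 1 (N - 1),
        ((if n + 1 = m then -Real.exp (y n - x m) else 0)
          + (if n = m then Real.exp (x m - y n) else 0))) (x m) := by
    apply HasDerivAt.fun_sum
    intro n _
    have ha : HasDerivAt (fun t : ℝ => Real.exp (y n - Function.update x m t (n + 1)))
        (if n + 1 = m then -Real.exp (y n - x m) else 0) (x m) := by
      by_cases hn : n + 1 = m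
      · have hf : (fun t : ℝ => Real.exp (y n - Function.update x m t (n + 1)))
            = fun t : ℝ => Real.exp (y n - t) := by
          funext t; rw [hn, Function.update_self]
        rw [hf, if_pos hn]
        simpa using (((hasDerivAt_id (x m)).const_sub (y n)).exp)
      · have hf : (fun t : ℝ => Real.exp (y n - Function.update x m t (n + 1)))
            = fun _ => Real.exp (y n - x (n + 1)) := by
          funext t; rw [Function.update_of_ne hn]
        rw [hf, if_neg hn]
        exact hasDerivAt_const _ _
    have hb : HasDerivAt (fun t : ℝ => Real.exp (Function.update x m t n - y n))
        (if n = m then Real.exp (x m - y n) else 0) (x m) := by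
      by_cases hn : n = m
      · have hf : (fun t : ℝ => Real.exp (Function.update x m t n - y n))
            = fun t : ℝ => Real.exp (t - y n) := by
          funext t; rw [hn, Function.update_self]
        rw [hf, if_pos hn]
        simpa using (((hasDerivAt_id (x m)).sub_const (y n)).exp)
      · have hf : (fun t : ℝ => Real.exp (Function.update x m t n - y n))
            = fun _ => Real.exp (x n - y n) := by
          funext t; rw [Function.update_of_ne hn]
        rw [hf, if_neg hn]
        exact hasDerivAt_const _ _
    exact ha.add hb
  have hF : HasDerivAt (fun t : ℝ =>
      Complex.I * u / hbar
        * (((∑ n ∈ Finset.Icc 1 N, Function.update x m t n)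
             - ∑ n ∈ Finset.Icc 1 (N - 1), y n : ℝ) : ℂ)
        - (((1 / hbar) * ∑ n ∈ Finset.Icc 1 (N - 1),
            (Real.exp (y n - Function.update x m t (n + 1))
              + Real.exp (Function.update x m t n - y n)) : ℝ) : ℂ))
      (Complex.I * u / hbar * ((1 : ℝ) : ℂ)
        - (((1 / hbar) * ∑ n ∈ Finset.Icc 1 (N - 1),
            ((if n + 1 = m then -Real.exp (y n - x m) else 0)
              + (if n = m then Real.exp (x m - y n) else 0)) : ℝ) : ℂ)) (x m) :=
    (h1.ofReal_comp.const_mul (Complex.I * u / hbar)).sub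
      ((h2.const_mul ((1:ℝ) / hbar)).ofReal_comp)
  have hE := hF.cexp
  simp only [Function.update_eq_self] at hE
  unfold LamKer
  convert hE using 1
  push_cast
  ring

lemma pOp_lam (hbar : ℝ) (hh : hbar ≠ 0) (N : ℕ) (u : ℂ) (y : ℕ → ℝ)
    (m : ℕ) (hm1 : 1 ≤ m) (hmN : m ≤ N - 1) (x : ℕ → ℝ) :
    pOp hbar m (LamKer hbar N u y) x
      = (u - Complex.I * (if 2 ≤ m then ((Real.exp (y (m - 1) - x m) : ℝ) : ℂ) else 0)
           + Complex.I * ((Real.exp (x m - y m) : ℝ) : ℂ)) * LamKer hbar N u y x := by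
  have hmN' : m ≤ N := by omega
  have hder := (lam_hasDerivAt hbar N u y m hm1 hmN' x).deriv
  unfold pOp
  rw [hder]
  have hsplit : (∑ n ∈ Finset.Icc 1 (N - 1),
      ((if n + 1 = m then -Real.exp (y n - x m) else 0)
        + (if n = m then Real.exp (x m - y n) else 0)))
      = (if 2 ≤ m then -Real.exp (y (m - 1) - x m) else 0) + Real.exp (x m - y m) := by
    rw [Finset.sum_add_distrib]
    have e2 : (∑ n ∈ Finset.Icc 1 (N - 1), (if n = m then Real.exp (x m - y n) else 0))
        = Real.exp (x m - y m) := by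
      rw [Finset.sum_ite_eq' (Finset.Icc 1 (N - 1)) m (fun n => Real.exp (x m - y n))]
      simp [Finset.mem_Icc.mpr ⟨hm1, hmN⟩]
    have e1 : (∑ n ∈ Finset.Icc 1 (N - 1), (if n + 1 = m then -Real.exp (y n - x m) else 0))
        = (if 2 ≤ m then -Real.exp (y (m - 1) - x m) else 0) := by
      have hcond : ∀ n ∈ Finset.Icc 1 (N - 1),
          ((if n + 1 = m then -Real.exp (y n - x m) else 0) : ℝ)
            = (if n = m - 1 then -Real.exp (y n - x m) else 0) := by
        intro n hn
        have hn1 : 1 ≤ n := (Finset.mem_Icc.mp hn).1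
        have hiff : (n + 1 = m) ↔ (n = m - 1) := by omega
        simp only [hiff]
      rw [Finset.sum_congr rfl hcond,
        Finset.sum_ite_eq' (Finset.Icc 1 (N - 1)) (m - 1) (fun n => -Real.exp (y n - x m))]
      by_cases h2 : 2 ≤ m
      · rw [if_pos (Finset.mem_Icc.mpr ⟨by omega, by omega⟩), if_pos h2]
      · rw [if_neg (by rw [Finset.mem_Icc]; omega), if_neg h2]
    rw [e1, e2]
  rw [hsplit]
  have hC : (hbar : ℂ) ≠ 0 := Complex.ofReal_ne_zero.mpr hh
  have hI : Complex.I * Complex.I = -1 := Complex.I_mul_I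
  by_cases h2 : 2 ≤ m
  · rw [if_pos h2, if_pos h2]
    push_cast
    field_simp
    linear_combination (-u * LamKer hbar N u y x) * hI
  · rw [if_neg h2, if_neg h2]
    push_cast
    field_simp
    linear_combination (-u * LamKer hbar N u y x) * hI

lemma Aop_succ (hbar : ℝ) (u : ℂ) (m : ℕ) (f : TodaFun) (x : ℕ → ℝ) :
    Aop hbar u (m + 1) f x
      = (u * Aop hbar u m f x - pOp hbar (m + 1) (Aop hbar u m f) x)
        + ((Real.exp (-(x (m + 1))) : ℝ) : ℂ) * Cop hbar u m f x := by
  simp [Aop, Cop, Tmat, mulOp, Lax]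

lemma Cop_succ (hbar : ℝ) (u : ℂ) (m : ℕ) (f : TodaFun) (x : ℕ → ℝ) :
    Cop hbar u (m + 1) f x
      = -((Real.exp (x (m + 1)) : ℝ) : ℂ) * Aop hbar u m f x := by
  simp [Aop, Cop, Tmat, mulOp, Lax]

/-- value of `C_m Λ`. -/
def Cval (hbar : ℝ) (N : ℕ) (u : ℂ) (y : ℕ → ℝ) : ℕ → (ℕ → ℝ) → ℂ
  | 0, _ => 0
  | (k + 1), x => (-Complex.I) ^ (k + 2) * ((Real.exp (x (k + 1)) : ℝ) : ℂ)
      * ((Real.exp (SS y k x) : ℝ) : ℂ) * LamKer hbar N u y x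

lemma neg_I_sq : (-Complex.I) * (-Complex.I) = -1 := by
  have := Complex.I_mul_I
  linear_combination this

lemma AC_formula (hbar : ℝ) (hh : hbar ≠ 0) (N : ℕ) (u : ℂ) (y : ℕ → ℝ) :
    ∀ m, m ≤ N - 1 →
      (∀ x, Aop hbar u m (LamKer hbar N u y) x
          = (-Complex.I) ^ m * ((Real.exp (SS y m x) : ℝ) : ℂ) * LamKer hbar N u y x)
      ∧ (∀ x, Cop hbar u m (LamKer hbar N u y) x = Cval hbar N u y m x) := by
  intro m
  induction m with
  | zero =>
    intro _
    refine ⟨fun x => ?_, fun x => ?_⟩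
    · have hIcc : Finset.Icc 1 0 = (∅ : Finset ℕ) := Finset.Icc_eq_empty (by omega)
      simp [Aop, Tmat, SS, hIcc]
    · simp [Cop, Tmat, Cval]
  | succ k ih =>
    intro hk
    have hk' : k ≤ N - 1 := by omega
    obtain ⟨ihA, ihC⟩ := ih hk'
    have hApt : Aop hbar u k (LamKer hbar N u y)
        = fun z => ((-Complex.I) ^ k * ((Real.exp (SS y k z) : ℝ) : ℂ))
            * LamKer hbar N u y z := by
      funext z; rw [ihA z]
    constructor
    · intro x
      rw [Aop_succ, ihA x, ihC x, hApt]
      have hp : pOp hbar (k + 1)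
          (fun z => ((-Complex.I) ^ k * ((Real.exp (SS y k z) : ℝ) : ℂ))
            * LamKer hbar N u y z) x
          = ((-Complex.I) ^ k * ((Real.exp (SS y k x) : ℝ) : ℂ))
            * ((u - Complex.I
                  * (if 2 ≤ k + 1 then ((Real.exp (y (k + 1 - 1) - x (k + 1)) : ℝ) : ℂ) else 0)
                 + Complex.I * ((Real.exp (x (k + 1) - y (k + 1)) : ℝ) : ℂ))
               * LamKer hbar N u y x) := by
        unfold pOp
        have hfun : (fun t : ℝ =>
            ((-Complex.I) ^ k * ((Real.exp (SS y k (Function.update x (k + 1) t)) : ℝ) : ℂ))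
              * LamKer hbar N u y (Function.update x (k + 1) t))
            = fun t : ℝ => ((-Complex.I) ^ k * ((Real.exp (SS y k x) : ℝ) : ℂ))
              * LamKer hbar N u y (Function.update x (k + 1) t) := by
          funext t; rw [SS_update y k (k + 1) (by omega) x t]
        rw [hfun]
        have hd := ((lam_hasDerivAt hbar N u y (k + 1) (by omega) (by omega) x).const_mul
          ((-Complex.I) ^ k * ((Real.exp (SS y k x) : ℝ) : ℂ))).deriv
        rw [hd]
        have hpl := pOp_lam hbar hh N u y (k + 1) (by omega) hk x
        unfold pOp at hpl
        rw [(lam_hasDerivAt hbar N u y (k + 1) (by omega) (by omega) x).deriv] at hpl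
        linear_combination ((-Complex.I) ^ k * ((Real.exp (SS y k x) : ℝ) : ℂ)) * hpl
      rw [hp]
      rcases Nat.eq_zero_or_pos k with hk0 | hkpos
      · subst hk0
        simp only [Cval]
        rw [if_neg (by omega : ¬ 2 ≤ 0 + 1)]
        have hS1 : Real.exp (SS y (0 + 1) x) = Real.exp (SS y 0 x) * Real.exp (x (0+1) - y (0+1)) := by
          rw [SS_succ, Real.exp_add]
        rw [hS1]
        push_cast
        ring
      · obtain ⟨j, rfl⟩ : ∃ j, k = j + 1 := ⟨k - 1, by omega⟩
        simp only [Cval]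
        rw [if_pos (by omega : 2 ≤ j + 1 + 1)]
        have hred : j + 1 + 1 - 1 = j + 1 := by omega
        rw [hred]
        have hSk1 : Real.exp (SS y (j + 1 + 1) x)
            = Real.exp (SS y (j + 1) x) * Real.exp (x (j + 1 + 1) - y (j + 1 + 1)) := by
          rw [SS_succ, Real.exp_add]
        have hSk : Real.exp (SS y (j + 1) x)
            = Real.exp (SS y j x) * Real.exp (x (j + 1) - y (j + 1)) := by
          rw [SS_succ, Real.exp_add]
        have hcan : Real.exp (x (j + 1) - y (j + 1)) * Real.exp (y (j + 1) - x (j + 1 + 1))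
            = Real.exp (-(x (j + 1 + 1))) * Real.exp (x (j + 1)) := by
          rw [← Real.exp_add, ← Real.exp_add]
          congr 1
          ring
        have hcan' : ((Real.exp (x (j + 1) - y (j + 1)) : ℝ) : ℂ)
              * ((Real.exp (y (j + 1) - x (j + 1 + 1)) : ℝ) : ℂ)
            = ((Real.exp (-(x (j + 1 + 1))) : ℝ) : ℂ) * ((Real.exp (x (j + 1)) : ℝ) : ℂ) := by
          exact_mod_cast congrArg (fun r : ℝ => (r : ℂ)) hcan
        rw [hSk1, hSk]
        push_cast
        push_cast at hcan'
        linear_combination (Complex.I * (-Complex.I) ^ (j + 1)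
            * Complex.exp ((SS y j x : ℝ) : ℂ) * LamKer hbar N u y x) * hcan'
    · intro x
      rw [Cop_succ, ihA x]
      simp only [Cval]
      have h2 : (-Complex.I) ^ (k + 2) = -((-Complex.I) ^ k) := by
        have hstep : (-Complex.I) ^ (k + 2)
            = (-Complex.I) ^ k * ((-Complex.I) * (-Complex.I)) := by ring
        rw [hstep, neg_I_sq]; ring
      rw [h2]
      ring

end CopAux

theorem Cop_shifts_LamKer (hbar : ℝ) (hh : 0 < hbar) (u : ℂ) (N : ℕ) (hN : 1 ≤ N)
    (y : ℕ → ℝ) :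
    ∀ x : ℕ → ℝ,
      Cop hbar u N (LamKer hbar N u y) x
        = (-Complex.I) ^ (N + 1) * LamKer hbar N (u - Complex.I * hbar) y x := by
  intro x
  have hh' : hbar ≠ 0 := ne_of_gt hh
  obtain ⟨k, rfl⟩ : ∃ k, N = k + 1 := ⟨N - 1, by omega⟩
  have hA := (CopAux.AC_formula hbar hh' (k + 1) u y k (by omega)).1 x
  rw [CopAux.Cop_succ, hA]
  have hC : (hbar : ℂ) ≠ 0 := Complex.ofReal_ne_zero.mpr hh'
  have hI : Complex.I * Complex.I = -1 := Complex.I_mul_I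
  have key : LamKer hbar (k + 1) (u - Complex.I * hbar) y x
      = Complex.exp ((((∑ n ∈ Finset.Icc 1 (k + 1), x n)
            - ∑ n ∈ Finset.Icc 1 (k + 1 - 1), y n : ℝ)) : ℂ)
        * LamKer hbar (k + 1) u y x := by
    unfold LamKer
    rw [← Complex.exp_add]
    congr 1
    push_cast
    field_simp
    linear_combination (-(hbar : ℂ) * ((∑ n ∈ Finset.Icc 1 (k + 1), ((x n : ℝ) : ℂ))
        - ∑ n ∈ Finset.Icc 1 k, ((y n : ℝ) : ℂ))) * hI
  rw [key]
  have hS : ((∑ n ∈ Finset.Icc 1 (k + 1), x n)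
      - ∑ n ∈ Finset.Icc 1 (k + 1 - 1), y n : ℝ) = CopAux.SS y k x + x (k + 1) := by
    have hred : k + 1 - 1 = k := by omega
    rw [hred]
    unfold CopAux.SS
    rw [Finset.sum_Icc_succ_top (by omega : 1 ≤ k + 1), Finset.sum_sub_distrib]
    ring
  rw [hS]
  push_cast
  rw [Complex.exp_add]
  have h2 : (-Complex.I) ^ (k + 1 + 1) = -((-Complex.I) ^ k) := by
    have hstep : (-Complex.I) ^ (k + 1 + 1)
        = (-Complex.I) ^ k * ((-Complex.I) * (-Complex.I)) := by ring
    rw [hstep, CopAux.neg_I_sq]; ring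
  rw [h2]
  ring

end
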